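/- Let d ≥ 1. Every symplectic matrix 𝒜 ∈ Sp(2d,ℝ) can be factored as 𝒜 = V_Q · D_L · R_U with Q ∈ ℝ^{d×d} symmetric, L ∈ ℝ^{d×d} invertible, and U ∈ U(d,ℂ) unitary (pre-Iwasawa decomposition). Moreover, there is exactly one such factorization in which L is in addition symmetric and positive definite. -/

import Mathlib

open Matrix

section PreIwasawaAux
set_option linter.unusedSectionVars false

variable {n : Type*} [Fintype n] [DecidableEq n]

/-- Combine two real matrices into a complex one (auxiliary). -/
private def cplx (X Y : Matrix n n ℝ) : Matrix n n ℂ :=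
  Matrix.of fun i j => ⟨X i j, Y i j⟩

private lemma cplx_map_re (X Y : Matrix n n ℝ) : (cplx X Y).map Complex.re = X := rfl
private lemma cplx_map_im (X Y : Matrix n n ℝ) : (cplx X Y).map Complex.im = Y := rfl

private lemma cplx_self (U : Matrix n n ℂ) : cplx (U.map Complex.re) (U.map Complex.im) = U := rfl

private lemma cplx_inj {X Y X' Y' : Matrix n n ℝ} (h : cplx X Y = cplx X' Y') :
    X = X' ∧ Y = Y' := by
  constructor
  · rw [← cplx_map_re X Y, h, cplx_map_re]
  · rw [← cplx_map_im X Y, h, cplx_map_im]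

private lemma cplx_mul (X Y X' Y' : Matrix n n ℝ) :
    cplx X Y * cplx X' Y' = cplx (X * X' - Y * Y') (X * Y' + Y * X') := by
  ext i j
  apply Complex.ext <;>
    simp [cplx, Matrix.mul_apply, Complex.re_sum, Complex.im_sum, Finset.sum_sub_distrib,
      Finset.sum_add_distrib]

private lemma cplx_star (X Y : Matrix n n ℝ) : star (cplx X Y) = cplx Xᵀ (-Yᵀ) := by
  ext i j
  apply Complex.ext <;> simp [cplx, Matrix.star_apply, Matrix.transpose_apply]

private lemma cplx_one : (cplx 1 0 : Matrix n n ℂ) = 1 := by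
  ext i j
  by_cases h : i = j <;> apply Complex.ext <;> simp [cplx, Matrix.one_apply, h]

/-- A positive semidefinite real matrix with invertible determinant is positive definite. -/
private lemma posDef_of_posSemidef_isUnit {M : Matrix n n ℝ} (h : M.PosSemidef)
    (hdet : IsUnit M.det) : M.PosDef := by
  refine posDef_iff_dotProduct_mulVec.mpr
    ⟨h.1, fun x hx => lt_of_le_of_ne (h.dotProduct_mulVec_nonneg x) fun h0 => hx ?_⟩
  have hMx : M *ᵥ x = 0 := (h.dotProduct_mulVec_zero_iff x).mp h0.symm
  have : M⁻¹ *ᵥ (M *ᵥ x) = x := by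
    rw [Matrix.mulVec_mulVec, Matrix.nonsing_inv_mul _ hdet, Matrix.one_mulVec]
  rw [hMx, Matrix.mulVec_zero] at this
  exact this.symm

private lemma cancel_left {M X Y : Matrix n n ℝ} (h : IsUnit M.det) (hXY : M * X = M * Y) :
    X = Y := by
  have h2 := congrArg (fun Z => M⁻¹ * Z) hXY
  simpa [← Matrix.mul_assoc, Matrix.nonsing_inv_mul _ h] using h2

end PreIwasawaAux

open scoped MatrixOrder

/-- **pre-Iwasawa decomposition.** Every `𝒜 ∈ Sp(2d,ℝ)` factors as
`𝒜 = V_Q · D_L · R_U` with `Q` symmetric, `L` invertible and `U` unitary; the factorization is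
unique if moreover `L` is required to be symmetric positive definite. -/
theorem pre_iwasawa_decomposition (d : ℕ) (hd : 1 ≤ d)
    (𝒜 : Matrix (Fin d ⊕ Fin d) (Fin d ⊕ Fin d) ℝ)
    (hSp : 𝒜ᵀ * fromBlocks 0 1 (-1) 0 * 𝒜 = fromBlocks 0 1 (-1) 0) :
    (∃ (Q L : Matrix (Fin d) (Fin d) ℝ) (U : Matrix (Fin d) (Fin d) ℂ),
      Qᵀ = Q ∧ IsUnit L.det ∧ U ∈ Matrix.unitaryGroup (Fin d) ℂ ∧
      𝒜 = fromBlocks 1 0 Q 1 * fromBlocks L 0 0 ((L⁻¹)ᵀ) *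
        fromBlocks (U.map Complex.re) (U.map Complex.im)
          (-(U.map Complex.im)) (U.map Complex.re)) ∧
    (∃! QLU : Matrix (Fin d) (Fin d) ℝ × Matrix (Fin d) (Fin d) ℝ × Matrix (Fin d) (Fin d) ℂ,
      (QLU.1)ᵀ = QLU.1 ∧ QLU.2.1.PosDef ∧ QLU.2.2 ∈ Matrix.unitaryGroup (Fin d) ℂ ∧
      𝒜 = fromBlocks 1 0 QLU.1 1 * fromBlocks QLU.2.1 0 0 (((QLU.2.1)⁻¹)ᵀ) *
        fromBlocks ((QLU.2.2).map Complex.re) ((QLU.2.2).map Complex.im)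
          (-((QLU.2.2).map Complex.im)) ((QLU.2.2).map Complex.re)) := by
  classical
  set J : Matrix (Fin d ⊕ Fin d) (Fin d ⊕ Fin d) ℝ := fromBlocks 0 1 (-1) 0 with hJdef
  have hJJ : J * J = -1 := by
    rw [hJdef, fromBlocks_multiply]
    simp only [Matrix.mul_zero, Matrix.mul_one, Matrix.mul_neg, Matrix.zero_mul, Matrix.one_mul,
      zero_add, add_zero, neg_zero]
    rw [show (fromBlocks (-1) 0 0 (-1) : Matrix (Fin d ⊕ Fin d) (Fin d ⊕ Fin d) ℝ)
      = -(fromBlocks 1 0 0 1) by rw [fromBlocks_neg]; norm_num, fromBlocks_one]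
  -- transposed symplectic relation
  have hSp' : 𝒜 * J * 𝒜ᵀ = J := by
    have h1 : (-(J * 𝒜ᵀ * J)) * 𝒜 = 1 := by
      have e : (-(J * 𝒜ᵀ * J)) * 𝒜 = -(J * (𝒜ᵀ * J * 𝒜)) := by noncomm_ring
      rw [e, hSp, hJJ, neg_neg]
    have h2 : 𝒜 * (-(J * 𝒜ᵀ * J)) = 1 := mul_eq_one_comm.mp h1
    have h3 : (𝒜 * (-(J * 𝒜ᵀ * J))) * (-J) = -J := by rw [h2, Matrix.one_mul]
    have h4 : (𝒜 * (-(J * 𝒜ᵀ * J))) * (-J) = 𝒜 * J * 𝒜ᵀ * (J * J) := by noncomm_ring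
    rw [h4, hJJ] at h3
    have : -(𝒜 * J * 𝒜ᵀ) = -J := by rw [← h3]; noncomm_ring
    exact neg_inj.mp this
  -- block decomposition
  set A := 𝒜.toBlocks₁₁ with hAdef
  set B := 𝒜.toBlocks₁₂ with hBdef
  set C := 𝒜.toBlocks₂₁ with hCdef
  set D := 𝒜.toBlocks₂₂ with hDdef
  have h𝒜 : 𝒜 = fromBlocks A B C D := (fromBlocks_toBlocks 𝒜).symm
  rw [h𝒜, hJdef, fromBlocks_transpose, fromBlocks_multiply, fromBlocks_multiply] at hSp
  simp only [Matrix.mul_zero, Matrix.mul_one, zero_add, add_zero,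
    Matrix.mul_neg, Matrix.neg_mul, Matrix.zero_mul, Matrix.one_mul] at hSp
  rw [fromBlocks_inj] at hSp
  obtain ⟨r1, r2, r3, r4⟩ := hSp
  rw [h𝒜, hJdef, fromBlocks_transpose, fromBlocks_multiply, fromBlocks_multiply] at hSp'
  simp only [Matrix.mul_zero, Matrix.mul_one, zero_add, add_zero,
    Matrix.mul_neg, Matrix.neg_mul, Matrix.zero_mul, Matrix.one_mul] at hSp'
  rw [fromBlocks_inj] at hSp'
  obtain ⟨s1, s2, s3, s4⟩ := hSp'
  -- basic relations in convenient form
  have e1 : Cᵀ * A = Aᵀ * C := by linear_combination (norm := noncomm_ring) -r1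
  have e2 : Cᵀ * B = Aᵀ * D - 1 := by linear_combination (norm := noncomm_ring) -r2
  have e3 : Dᵀ * A = Bᵀ * C + 1 := by linear_combination (norm := noncomm_ring) -r3
  have e4 : Dᵀ * B = Bᵀ * D := by linear_combination (norm := noncomm_ring) -r4
  have f1 : A * Bᵀ = B * Aᵀ := by linear_combination (norm := noncomm_ring) s1
  have f2 : A * Dᵀ - B * Cᵀ = 1 := by linear_combination (norm := noncomm_ring) s2
  have f2t : D * Aᵀ - C * Bᵀ = 1 := by
    have := congrArg Matrix.transpose f2
    simpa [Matrix.transpose_sub, Matrix.transpose_mul] using this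
  -- P = A Aᵀ + B Bᵀ is positive definite
  set P := A * Aᵀ + B * Bᵀ with hPdef
  have hPsd : P.PosSemidef := by
    have h1 := posSemidef_self_mul_conjTranspose A
    have h2 := posSemidef_self_mul_conjTranspose B
    rw [conjTranspose_eq_transpose_of_trivial] at h1 h2
    exact h1.add h2
  have hPpd : P.PosDef := by
    refine posDef_iff_dotProduct_mulVec.mpr
      ⟨hPsd.1, fun x hx => lt_of_le_of_ne (hPsd.dotProduct_mulVec_nonneg x) fun h0 => hx ?_⟩
    have hsx : star x = x := by
      funext i; exact star_trivial _
    have hsum : (Aᵀ *ᵥ x) ⬝ᵥ (Aᵀ *ᵥ x) + (Bᵀ *ᵥ x) ⬝ᵥ (Bᵀ *ᵥ x) = 0 := by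
      have h0' : x ⬝ᵥ (P *ᵥ x) = 0 := by rw [← hsx]; exact h0.symm
      rw [hPdef, Matrix.add_mulVec, dotProduct_add] at h0'
      rw [← h0']
      congr 1 <;>
        · rw [← Matrix.mulVec_mulVec, Matrix.dotProduct_mulVec, Matrix.vecMul_transpose]
          exact dotProduct_comm _ _
    have hnA : 0 ≤ (Aᵀ *ᵥ x) ⬝ᵥ (Aᵀ *ᵥ x) := Finset.sum_nonneg fun i _ => mul_self_nonneg _
    have hnB : 0 ≤ (Bᵀ *ᵥ x) ⬝ᵥ (Bᵀ *ᵥ x) := Finset.sum_nonneg fun i _ => mul_self_nonneg _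
    have hATx : Aᵀ *ᵥ x = 0 := dotProduct_self_eq_zero.mp (by linarith)
    have hBTx : Bᵀ *ᵥ x = 0 := dotProduct_self_eq_zero.mp (by linarith)
    have hone : (1 : Matrix (Fin d) (Fin d) ℝ) *ᵥ x = 0 := by
      rw [← f2t, Matrix.sub_mulVec, ← Matrix.mulVec_mulVec, ← Matrix.mulVec_mulVec,
        hATx, hBTx, Matrix.mulVec_zero, Matrix.mulVec_zero, sub_zero]
    rwa [Matrix.one_mulVec] at hone
  have hPdet : IsUnit P.det := isUnit_iff_ne_zero.mpr (ne_of_gt hPpd.det_pos)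
  -- L : the positive square root of P
  set L := CFC.sqrt P with hLdef
  have hLsd : L.PosSemidef := Matrix.nonneg_iff_posSemidef.mp (CFC.sqrt_nonneg P)
  have hLL : L * L = P := CFC.sqrt_mul_sqrt_self P (Matrix.nonneg_iff_posSemidef.mpr hPsd)
  have hLsym : Lᵀ = L := by
    have := hLsd.1.eq
    rwa [conjTranspose_eq_transpose_of_trivial] at this
  have hLdet : IsUnit L.det := by
    have hdd : L.det * L.det = P.det := by rw [← Matrix.det_mul, hLL]
    rcases mul_ne_zero_iff.mp (hdd ▸ ne_of_gt hPpd.det_pos) with ⟨h, -⟩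
    exact isUnit_iff_ne_zero.mpr h
  have hLpd : L.PosDef := posDef_of_posSemidef_isUnit hLsd hLdet
  have hLit : (L⁻¹)ᵀ = L⁻¹ := by rw [Matrix.transpose_nonsing_inv, hLsym]
  have hPinv : P⁻¹ = L⁻¹ * L⁻¹ := by rw [← hLL, Matrix.mul_inv_rev]
  have hPsym : Pᵀ = P := by
    have := hPsd.1.eq
    rwa [conjTranspose_eq_transpose_of_trivial] at this
  have hPit : (P⁻¹)ᵀ = P⁻¹ := by rw [Matrix.transpose_nonsing_inv, hPsym]
  set X := L⁻¹ * A with hXdef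
  set Y := L⁻¹ * B with hYdef
  have hLX : L * X = A := Matrix.mul_nonsing_inv_cancel_left _ _ hLdet
  have hLY : L * Y = B := Matrix.mul_nonsing_inv_cancel_left _ _ hLdet
  have key1 : X * Xᵀ + Y * Yᵀ = 1 := by
    have h : X * Xᵀ + Y * Yᵀ = L⁻¹ * P * L⁻¹ := by
      rw [hXdef, hYdef, Matrix.transpose_mul, Matrix.transpose_mul, hLit, hPdef]
      noncomm_ring
    rw [h, ← hLL, show L⁻¹ * (L * L) * L⁻¹ = (L⁻¹ * L) * (L * L⁻¹) by noncomm_ring,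
      Matrix.nonsing_inv_mul _ hLdet, Matrix.mul_nonsing_inv _ hLdet, Matrix.one_mul]
  have key2 : Y * Xᵀ - X * Yᵀ = 0 := by
    have hx : X * Yᵀ = L⁻¹ * (A * Bᵀ) * L⁻¹ := by
      rw [hXdef, hYdef, Matrix.transpose_mul, hLit]; noncomm_ring
    have hy : Y * Xᵀ = L⁻¹ * (B * Aᵀ) * L⁻¹ := by
      rw [hXdef, hYdef, Matrix.transpose_mul, hLit]; noncomm_ring
    rw [hx, hy, f1, sub_self]
  have hUmem : cplx X Y ∈ Matrix.unitaryGroup (Fin d) ℂ := by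
    rw [Matrix.mem_unitaryGroup_iff, cplx_star, cplx_mul]
    rw [show X * Xᵀ - Y * -Yᵀ = X * Xᵀ + Y * Yᵀ by noncomm_ring, key1,
      show X * -Yᵀ + Y * Xᵀ = Y * Xᵀ - X * Yᵀ by noncomm_ring, key2, cplx_one]
  -- Q
  set Q := (C * Aᵀ + D * Bᵀ) * P⁻¹ with hQdef
  have hkey : (A * Cᵀ + B * Dᵀ) * P = P * (C * Aᵀ + D * Bᵀ) := by
    have expand : (A * Cᵀ + B * Dᵀ) * P
        = A * (Cᵀ * A) * Aᵀ + A * (Cᵀ * B) * Bᵀ + B * (Dᵀ * A) * Aᵀ + B * (Dᵀ * B) * Bᵀ := by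
      rw [hPdef]; noncomm_ring
    rw [expand, e1, e2, e3, e4]
    have h2 : A * (Aᵀ * C) * Aᵀ + A * (Aᵀ * D - 1) * Bᵀ + B * (Bᵀ * C + 1) * Aᵀ
        + B * (Bᵀ * D) * Bᵀ = P * (C * Aᵀ + D * Bᵀ) + (B * Aᵀ - A * Bᵀ) := by
      rw [hPdef]; noncomm_ring
    rw [h2, ← f1, sub_self, add_zero]
  have hQsym : Qᵀ = Q := by
    rw [hQdef, Matrix.transpose_mul, hPit,
      show (C * Aᵀ + D * Bᵀ)ᵀ = A * Cᵀ + B * Dᵀ by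
        rw [Matrix.transpose_add, Matrix.transpose_mul, Matrix.transpose_mul,
          Matrix.transpose_transpose, Matrix.transpose_transpose]]
    calc P⁻¹ * (A * Cᵀ + B * Dᵀ)
        = P⁻¹ * ((A * Cᵀ + B * Dᵀ) * P) * P⁻¹ := by
          rw [show P⁻¹ * ((A * Cᵀ + B * Dᵀ) * P) * P⁻¹
            = P⁻¹ * (A * Cᵀ + B * Dᵀ) * (P * P⁻¹) by noncomm_ring,
            Matrix.mul_nonsing_inv _ hPdet, Matrix.mul_one]
      _ = P⁻¹ * (P * (C * Aᵀ + D * Bᵀ)) * P⁻¹ := by rw [hkey]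
      _ = (C * Aᵀ + D * Bᵀ) * P⁻¹ := by
          rw [← Matrix.mul_assoc, Matrix.nonsing_inv_mul _ hPdet, Matrix.one_mul]
  have hPQ : P * Q = A * Cᵀ + B * Dᵀ := by
    rw [hQdef, ← Matrix.mul_assoc, ← hkey, Matrix.mul_assoc, Matrix.mul_nonsing_inv _ hPdet,
      Matrix.mul_one]
  have hCeq : Q * A - P⁻¹ * B = C := by
    refine cancel_left hPdet ?_
    rw [Matrix.mul_sub, ← Matrix.mul_assoc, hPQ, ← Matrix.mul_assoc,
      Matrix.mul_nonsing_inv _ hPdet, Matrix.one_mul]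
    calc (A * Cᵀ + B * Dᵀ) * A - B = A * (Cᵀ * A) + B * (Dᵀ * A) - B := by noncomm_ring
      _ = A * (Aᵀ * C) + B * (Bᵀ * C + 1) - B := by rw [e1, e3]
      _ = P * C := by rw [hPdef]; noncomm_ring
  have hDeq : Q * B + P⁻¹ * A = D := by
    refine cancel_left hPdet ?_
    rw [Matrix.mul_add, ← Matrix.mul_assoc, hPQ, ← Matrix.mul_assoc,
      Matrix.mul_nonsing_inv _ hPdet, Matrix.one_mul]
    calc (A * Cᵀ + B * Dᵀ) * B + A = A * (Cᵀ * B) + B * (Dᵀ * B) + A := by noncomm_ring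
      _ = A * (Aᵀ * D - 1) + B * (Bᵀ * D) + A := by rw [e2, e4]
      _ = P * D := by rw [hPdef]; noncomm_ring
  -- the factorization
  have hfact : 𝒜 = fromBlocks 1 0 Q 1 * fromBlocks L 0 0 ((L⁻¹)ᵀ) * fromBlocks X Y (-Y) X := by
    rw [fromBlocks_multiply, fromBlocks_multiply]
    simp only [Matrix.mul_zero, Matrix.mul_one, Matrix.one_mul, Matrix.zero_mul, zero_add,
      add_zero, Matrix.mul_neg, neg_zero]
    rw [h𝒜, fromBlocks_inj]
    refine ⟨hLX.symm, hLY.symm, ?_, ?_⟩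
    · rw [Matrix.mul_assoc, hLX, hLit, hYdef, ← Matrix.mul_assoc, ← hPinv, ← sub_eq_add_neg]
      exact hCeq.symm
    · rw [Matrix.mul_assoc, hLY, hLit, hXdef, ← Matrix.mul_assoc, ← hPinv]
      exact hDeq.symm
  have hfact' : 𝒜 = fromBlocks 1 0 Q 1 * fromBlocks L 0 0 ((L⁻¹)ᵀ) *
      fromBlocks ((cplx X Y).map Complex.re) ((cplx X Y).map Complex.im)
        (-((cplx X Y).map Complex.im)) ((cplx X Y).map Complex.re) := by
    rw [cplx_map_re, cplx_map_im]; exact hfact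
  constructor
  · exact ⟨Q, L, cplx X Y, hQsym, hLdet, hUmem, hfact'⟩
  · refine ⟨⟨Q, L, cplx X Y⟩, ⟨hQsym, hLpd, hUmem, hfact'⟩, ?_⟩
    rintro ⟨Q', L', U'⟩ ⟨hQ's, hL'pd, hU'mem, heq⟩
    simp only at hQ's hL'pd hU'mem heq ⊢
    set X' := U'.map Complex.re with hX'def
    set Y' := U'.map Complex.im with hY'def
    have hL'sym : L'ᵀ = L' := by
      have := hL'pd.1.eq
      rwa [conjTranspose_eq_transpose_of_trivial] at this
    have hL'det : IsUnit L'.det := isUnit_iff_ne_zero.mpr (ne_of_gt hL'pd.det_pos)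
    have hL'it : (L'⁻¹)ᵀ = L'⁻¹ := by rw [Matrix.transpose_nonsing_inv, hL'sym]
    -- unpack the blocks of the assumed factorization
    rw [h𝒜, fromBlocks_multiply, fromBlocks_multiply] at heq
    simp only [Matrix.mul_zero, Matrix.mul_one, Matrix.one_mul, Matrix.zero_mul, zero_add,
      add_zero, Matrix.mul_neg, neg_zero] at heq
    rw [fromBlocks_inj] at heq
    obtain ⟨u1, u2, u3, u4⟩ := heq
    -- unitarity of U' in real terms
    have hU'c : cplx X' Y' * star (cplx X' Y') = 1 := by
      rw [hX'def, hY'def, cplx_self]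
      exact Matrix.mem_unitaryGroup_iff.mp hU'mem
    rw [cplx_star, cplx_mul, ← cplx_one] at hU'c
    obtain ⟨g1, g2⟩ := cplx_inj hU'c
    have g1' : X' * X'ᵀ + Y' * Y'ᵀ = 1 := by
      linear_combination (norm := noncomm_ring) g1
    -- L' is the positive square root of P
    have hL'L' : L' * L' = P := by
      rw [hPdef, u1, u2, Matrix.transpose_mul, Matrix.transpose_mul, hL'sym,
        show L' * X' * (X'ᵀ * L') + L' * Y' * (Y'ᵀ * L')
          = L' * (X' * X'ᵀ + Y' * Y'ᵀ) * L' by noncomm_ring,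
        g1', Matrix.mul_one]
    have hL'eq : L' = L := by
      exact (CFC.sqrt_unique hL'L' (Matrix.nonneg_iff_posSemidef.mpr hL'pd.posSemidef)).symm
    have hX'eq : X' = X := by
      refine cancel_left hLdet ?_
      rw [hLX, ← hL'eq]
      exact u1.symm
    have hY'eq : Y' = Y := by
      refine cancel_left hLdet ?_
      rw [hLY, ← hL'eq]
      exact u2.symm
    have hU'eq : U' = cplx X Y := by
      rw [← cplx_self U', ← hX'def, ← hY'def, hX'eq, hY'eq]
    -- recover Q'
    have hC' : C = Q' * A - P⁻¹ * B := by
      rw [u3, hL'eq, hX'eq, hY'eq, Matrix.mul_assoc, hLX, hLit, hYdef, ← Matrix.mul_assoc,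
        ← hPinv, ← sub_eq_add_neg]
    have hD' : D = Q' * B + P⁻¹ * A := by
      rw [u4, hL'eq, hX'eq, hY'eq, Matrix.mul_assoc, hLY, hLit, hXdef, ← Matrix.mul_assoc,
        ← hPinv]
    have hQ'P : C * Aᵀ + D * Bᵀ = Q' * P := by
      rw [hC', hD', hPdef,
        show (Q' * A - P⁻¹ * B) * Aᵀ + (Q' * B + P⁻¹ * A) * Bᵀ
          = Q' * (A * Aᵀ + B * Bᵀ) + P⁻¹ * (A * Bᵀ) - P⁻¹ * (B * Aᵀ) by noncomm_ring,
        f1, add_sub_cancel_right]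
    have hQ'eq : Q' = Q := by
      calc Q' = Q' * P * P⁻¹ := by
            rw [Matrix.mul_assoc, Matrix.mul_nonsing_inv _ hPdet, Matrix.mul_one]
        _ = (C * Aᵀ + D * Bᵀ) * P⁻¹ := by rw [hQ'P]
        _ = Q := hQdef.symm
    simp only [Prod.mk.injEq]
    exact ⟨hQ'eq, hL'eq, hU'eq⟩
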